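/- For every real number t with 0 ≤ t < 1, one has ∑_{n=1}^∞ n^{n-1} · (t·e^{-t})^n / n! = t. -/

import Mathlib

open Finset
open scoped NNReal ENNReal

lemma rexp_tsum (x : ℝ) : Real.exp x = ∑' n : ℕ, x ^ n / n.factorial := by
  rw [Real.exp_eq_exp_ℝ, NormedSpace.exp_eq_tsum_div]

lemma pow_div_fact_le_exp (m : ℕ) : (m : ℝ) ^ m / m.factorial ≤ Real.exp m := by
  rw [rexp_tsum]
  refine Summable.le_tsum (Real.summable_pow_div_factorial (m : ℝ)) m fun b _ => by positivity

lemma exp54lt : Real.exp (5 / 4) < 4 := by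
  have h1 : Real.exp 1 < 2.7182818286 := Real.exp_one_lt_d9
  have h4 : Real.exp (5 / 4) ^ (4 : ℕ) = Real.exp 1 ^ (5 : ℕ) := by
    rw [← Real.exp_nat_mul, ← Real.exp_nat_mul]; norm_num
  by_contra h
  push_neg at h
  have h2 : (4 : ℝ) ^ (4 : ℕ) ≤ Real.exp (5 / 4) ^ (4 : ℕ) :=
    pow_le_pow_left₀ (by norm_num) h 4
  rw [h4] at h2
  have h3 : Real.exp 1 ^ (5 : ℕ) < 2.7182818286 ^ (5 : ℕ) :=
    pow_lt_pow_left₀ h1 (Real.exp_pos 1).le (by norm_num)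
  norm_num at h2 h3
  linarith


lemma tree_alt_sum : ∀ e M : ℕ, e < M →
    ∑ j ∈ range (M + 1), (-1 : ℝ) ^ j * (M.choose j : ℝ) * (j : ℝ) ^ e = 0 := by
  intro e
  induction e using Nat.strong_induction_on with
  | _ e IH =>
  intro M hM
  match e, IH with
  | 0, _ =>
    have h := Int.alternating_sum_range_choose_of_ne (show M ≠ 0 by omega)
    have h' := congrArg (fun z : ℤ => (z : ℝ)) h
    push_cast at h'
    simpa using h'
  | e + 1, IH =>
    obtain ⟨N, rfl⟩ : ∃ N, M = N + 1 := ⟨M - 1, by omega⟩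
    have heN : e < N := by omega
    rw [Finset.sum_range_succ']
    have h0 : (-1 : ℝ) ^ 0 * ((N + 1).choose 0 : ℝ) * ((0 : ℕ) : ℝ) ^ (e + 1) = 0 := by
      simp
    rw [h0, add_zero]
    have hc : ∀ i : ℕ, (((N + 1).choose (i + 1) : ℝ)) * ((i : ℝ) + 1) = ((N : ℝ) + 1) * (N.choose i : ℝ) := by
      intro i
      have := Nat.add_one_mul_choose_eq N i
      have h' := congrArg (fun z : ℕ => (z : ℝ)) this
      push_cast at h'
      linarith [h']
    have key : ∀ i : ℕ, (-1 : ℝ) ^ (i + 1) * (((N + 1).choose (i + 1) : ℝ)) * ((i : ℝ) + 1) ^ (e + 1)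
        = (-((N : ℝ) + 1)) * ((-1 : ℝ) ^ i * (N.choose i : ℝ) * ((i : ℝ) + 1) ^ e) := by
      intro i
      have : ((i : ℝ) + 1) ^ (e + 1) = ((i : ℝ) + 1) ^ e * ((i : ℝ) + 1) := by ring
      rw [this, pow_succ]
      linear_combination (-(-1 : ℝ) ^ i * ((i : ℝ) + 1) ^ e) * hc i
    have expand : ∀ i : ℕ, ((i : ℝ) + 1) ^ e = ∑ r ∈ range (e + 1), (i : ℝ) ^ r * (e.choose r : ℝ) := by
      intro i
      rw [add_pow]
      exact Finset.sum_congr rfl fun r _ => by rw [one_pow, mul_one]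
    have inner : ∑ i ∈ range (N + 1), (-1 : ℝ) ^ i * (N.choose i : ℝ) * ((i : ℝ) + 1) ^ e = 0 := by
      calc ∑ i ∈ range (N + 1), (-1 : ℝ) ^ i * (N.choose i : ℝ) * ((i : ℝ) + 1) ^ e
          = ∑ i ∈ range (N + 1), ∑ r ∈ range (e + 1),
              (e.choose r : ℝ) * ((-1 : ℝ) ^ i * (N.choose i : ℝ) * (i : ℝ) ^ r) := by
            refine Finset.sum_congr rfl fun i _ => ?_
            rw [expand i, Finset.mul_sum]
            exact Finset.sum_congr rfl fun r _ => by ring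
        _ = ∑ r ∈ range (e + 1), ∑ i ∈ range (N + 1),
              (e.choose r : ℝ) * ((-1 : ℝ) ^ i * (N.choose i : ℝ) * (i : ℝ) ^ r) := Finset.sum_comm
        _ = 0 := by
            refine Finset.sum_eq_zero fun r hr => ?_
            rw [← Finset.mul_sum, IH r (Finset.mem_range.mp hr) N (by
              have := Finset.mem_range.mp hr; omega), mul_zero]
    calc ∑ i ∈ range (N + 1), (-1 : ℝ) ^ (i + 1) * (((N + 1).choose (i + 1) : ℝ)) * (((i + 1 : ℕ) : ℝ)) ^ (e + 1)
        = ∑ i ∈ range (N + 1), (-((N : ℝ) + 1)) * ((-1 : ℝ) ^ i * (N.choose i : ℝ) * ((i : ℝ) + 1) ^ e) := by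
          refine Finset.sum_congr rfl fun i _ => ?_
          push_cast
          exact key i
      _ = (-((N : ℝ) + 1)) * ∑ i ∈ range (N + 1), (-1 : ℝ) ^ i * (N.choose i : ℝ) * ((i : ℝ) + 1) ^ e := by
          rw [Finset.mul_sum]
      _ = 0 := by rw [inner, mul_zero]


lemma tree_term_eq (t : ℝ) (M i : ℕ) (hi : i ≤ M + 1) :
    ((i : ℝ) + 1) ^ i / (((i + 1).factorial : ℕ) : ℝ) *
        ((-((i : ℝ) + 1) * t) ^ (M + 1 - i) / (((M + 1 - i).factorial : ℕ) : ℝ)) * t ^ (i + 1)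
      = t ^ (M + 2) * (-1 : ℝ) ^ (M + 2) / (((M + 2).factorial : ℕ) : ℝ) *
        ((-1 : ℝ) ^ (i + 1) * (((M + 2).choose (i + 1) : ℕ) : ℝ) * ((i : ℝ) + 1) ^ (M + 1)) := by
  set u := M + 1 - i with hudef
  have h1 : i + u = M + 1 := by omega
  have h2 : u + (i + 1) = M + 2 := by omega
  have hfacN := Nat.choose_mul_factorial_mul_factorial (show i + 1 ≤ M + 2 by omega)
  rw [show M + 2 - (i + 1) = u from by omega] at hfacN
  have hfac : (((M + 2).choose (i + 1) : ℕ) : ℝ) * ((i + 1).factorial : ℝ) * (u.factorial : ℝ)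
      = (((M + 2).factorial : ℕ) : ℝ) := by exact_mod_cast congrArg (Nat.cast : ℕ → ℝ) hfacN
  have hs : (-((i : ℝ) + 1) * t) ^ u = (-1 : ℝ) ^ u * ((i : ℝ) + 1) ^ u * t ^ u := by
    rw [show -((i : ℝ) + 1) * t = (-1) * (((i : ℝ) + 1) * t) by ring, mul_pow, mul_pow]
    ring
  have hpow1 : ((i : ℝ) + 1) ^ i * ((i : ℝ) + 1) ^ u = ((i : ℝ) + 1) ^ (M + 1) := by
    rw [← pow_add, h1]
  have hpow2 : t ^ u * t ^ (i + 1) = t ^ (M + 2) := by rw [← pow_add, h2]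
  have hsign : (-1 : ℝ) ^ (M + 2) * (-1 : ℝ) ^ (i + 1) = (-1 : ℝ) ^ u := by
    have h3 : (-1 : ℝ) ^ (M + 2) = (-1 : ℝ) ^ u * (-1 : ℝ) ^ (i + 1) := by rw [← pow_add, h2]
    have h4 : (-1 : ℝ) ^ (i + 1) * (-1 : ℝ) ^ (i + 1) = 1 := by
      rw [← pow_add]
      exact Even.neg_one_pow ⟨i + 1, by ring⟩
    calc (-1 : ℝ) ^ (M + 2) * (-1 : ℝ) ^ (i + 1)
        = (-1 : ℝ) ^ u * ((-1 : ℝ) ^ (i + 1) * (-1 : ℝ) ^ (i + 1)) := by rw [h3]; ring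
      _ = (-1 : ℝ) ^ u := by rw [h4, mul_one]
  have hdiv : (1 : ℝ) / (((i + 1).factorial : ℝ) * (u.factorial : ℝ))
      = (((M + 2).choose (i + 1) : ℕ) : ℝ) / (((M + 2).factorial : ℕ) : ℝ) := by
    rw [div_eq_div_iff (by positivity) (by positivity)]
    linear_combination -hfac
  calc ((i : ℝ) + 1) ^ i / (((i + 1).factorial : ℕ) : ℝ) *
        ((-((i : ℝ) + 1) * t) ^ u / (((u).factorial : ℕ) : ℝ)) * t ^ (i + 1)
      = ((i : ℝ) + 1) ^ i * ((i : ℝ) + 1) ^ u * (t ^ u * t ^ (i + 1)) * (-1 : ℝ) ^ u /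
          (((i + 1).factorial : ℝ) * (u.factorial : ℝ)) := by rw [hs]; ring
    _ = ((i : ℝ) + 1) ^ (M + 1) * t ^ (M + 2) * ((-1 : ℝ) ^ (M + 2) * (-1 : ℝ) ^ (i + 1)) /
          (((i + 1).factorial : ℝ) * (u.factorial : ℝ)) := by rw [hpow1, hpow2, ← hsign]
    _ = ((i : ℝ) + 1) ^ (M + 1) * t ^ (M + 2) * ((-1 : ℝ) ^ (M + 2) * (-1 : ℝ) ^ (i + 1)) *
          ((1 : ℝ) / (((i + 1).factorial : ℝ) * (u.factorial : ℝ))) := by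
        rw [div_eq_mul_one_div]
    _ = _ := by rw [hdiv]; ring


set_option maxHeartbeats 1000000 in
lemma tree_small (t : ℝ) (ht : |t| < 1 / 8) :
    ∑' n : ℕ, ((n : ℝ) + 1) ^ n * (t * Real.exp (-t)) ^ (n + 1)
        / (Nat.factorial (n + 1) : ℝ) = t := by
  set a : ℕ × ℕ → ℝ := fun p =>
    ((p.1 : ℝ) + 1) ^ p.1 / ((p.1 + 1).factorial : ℝ) *
      ((-((p.1 : ℝ) + 1) * t) ^ p.2 / (p.2.factorial : ℝ)) * t ^ (p.1 + 1) with ha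
  -- absolute values
  have habs : ∀ p : ℕ × ℕ, |a p| =
      (((p.1 : ℝ) + 1) ^ p.1 / ((p.1 + 1).factorial : ℝ) * |t| ^ (p.1 + 1)) *
        ((((p.1 : ℝ) + 1) * |t|) ^ p.2 / (p.2.factorial : ℝ)) := by
    intro p
    have h1 : (0 : ℝ) ≤ (p.1 : ℝ) + 1 := by positivity
    rw [ha]
    simp only [abs_mul, abs_div, abs_pow, abs_neg, abs_mul, Nat.abs_cast,
      abs_of_nonneg h1]
    ring
  -- summability
  have hrowsum : ∀ n : ℕ, Summable fun k => |a (n, k)| := by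
    intro n
    refine Summable.congr (((Real.summable_pow_div_factorial (((n : ℝ) + 1) * |t|)).mul_left
      (((n : ℝ) + 1) ^ n / ((n + 1).factorial : ℝ) * |t| ^ (n + 1)))) fun k => ?_
    rw [habs]
  have hrow : ∀ n : ℕ, ∑' k, |a (n, k)| =
      (((n : ℝ) + 1) ^ n / ((n + 1).factorial : ℝ) * |t| ^ (n + 1)) *
        Real.exp (((n : ℝ) + 1) * |t|) := by
    intro n
    calc ∑' k, |a (n, k)|
        = ∑' k, (((n : ℝ) + 1) ^ n / ((n + 1).factorial : ℝ) * |t| ^ (n + 1)) *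
            ((((n : ℝ) + 1) * |t|) ^ k / (k.factorial : ℝ)) := tsum_congr fun k => habs (n, k)
      _ = (((n : ℝ) + 1) ^ n / ((n + 1).factorial : ℝ) * |t| ^ (n + 1)) *
            ∑' k, ((((n : ℝ) + 1) * |t|) ^ k / (k.factorial : ℝ)) := tsum_mul_left
      _ = _ := by rw [← rexp_tsum]
  set q : ℝ := |t| * Real.exp (1 + |t|) with hqdef
  have hq0 : 0 ≤ q := by positivity
  have hexp54 : Real.exp (5 / 4) < 4 := by
    have h1 : Real.exp 1 < 2.7182818286 := Real.exp_one_lt_d9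
    have h4 : Real.exp (5 / 4) ^ (4 : ℕ) = Real.exp 1 ^ (5 : ℕ) := by
      rw [← Real.exp_nat_mul, ← Real.exp_nat_mul]; norm_num
    by_contra h
    push_neg at h
    have h2 : (4 : ℝ) ^ (4 : ℕ) ≤ Real.exp (5 / 4) ^ (4 : ℕ) :=
      pow_le_pow_left₀ (by norm_num) h 4
    rw [h4] at h2
    have h3 : Real.exp 1 ^ (5 : ℕ) < 2.7182818286 ^ (5 : ℕ) :=
      pow_lt_pow_left₀ h1 (Real.exp_pos 1).le (by norm_num)
    norm_num at h2 h3
    linarith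
  have hq1 : q < 1 := by
    have habs0 := abs_nonneg t
    have hm : Real.exp (1 + |t|) ≤ Real.exp (5 / 4) :=
      Real.exp_le_exp.mpr (by linarith)
    calc q ≤ |t| * Real.exp (5 / 4) := mul_le_mul_of_nonneg_left hm habs0
      _ ≤ (1 / 8) * 4 := by
          apply mul_le_mul (le_of_lt ht) (le_of_lt hexp54) (Real.exp_pos _).le (by norm_num)
      _ < 1 := by norm_num
  have hbound : ∀ n : ℕ, ∑' k, |a (n, k)| ≤ q ^ (n + 1) := by
    intro n
    rw [hrow]
    have hA : ((n : ℝ) + 1) ^ n / ((n + 1).factorial : ℝ) ≤ Real.exp ((n : ℝ) + 1) := by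
      have e1 : ((n : ℝ) + 1) ^ n ≤ ((n : ℝ) + 1) ^ (n + 1) :=
        pow_le_pow_right₀ (by linarith [show (0:ℝ) ≤ (n:ℝ) from Nat.cast_nonneg n]) (by omega)
      have e2 := pow_div_fact_le_exp (n + 1)
      push_cast at e2
      calc ((n : ℝ) + 1) ^ n / ((n + 1).factorial : ℝ)
          ≤ ((n : ℝ) + 1) ^ (n + 1) / ((n + 1).factorial : ℝ) := by gcongr
        _ ≤ Real.exp ((n : ℝ) + 1) := e2
    have hqpow : q ^ (n + 1) =
        Real.exp ((n : ℝ) + 1) * |t| ^ (n + 1) * Real.exp (((n : ℝ) + 1) * |t|) := by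
      rw [hqdef, mul_pow, ← Real.exp_nat_mul]
      push_cast
      rw [show ((n : ℝ) + 1) * (1 + |t|) = (((n : ℝ) + 1) + ((n : ℝ) + 1) * |t|) by ring,
        Real.exp_add]
      ring
    rw [hqpow]
    have h1 : (0 : ℝ) ≤ |t| ^ (n + 1) := by positivity
    have h2 : (0 : ℝ) < Real.exp (((n : ℝ) + 1) * |t|) := Real.exp_pos _
    nlinarith [Real.exp_pos ((n : ℝ) + 1),
      mul_le_mul_of_nonneg_right hA h1]
  have habs_sum : Summable fun p : ℕ × ℕ => |a p| := by
    refine (summable_prod_of_nonneg fun p => abs_nonneg _).mpr ⟨hrowsum, ?_⟩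
    refine Summable.of_nonneg_of_le (fun n => tsum_nonneg fun k => abs_nonneg _) hbound ?_
    have : Summable fun n : ℕ => q ^ n := summable_geometric_of_lt_one hq0 hq1
    exact (summable_nat_add_iff 1).mpr this
  have hsa : Summable a := summable_abs_iff.mp habs_sum
  have hterm : ∀ n : ℕ, ∑' k, a (n, k) =
      ((n : ℝ) + 1) ^ n * (t * Real.exp (-t)) ^ (n + 1) / ((n + 1).factorial : ℝ) := by
    intro n
    calc ∑' k, a (n, k)
        = ∑' k, (((n : ℝ) + 1) ^ n / ((n + 1).factorial : ℝ) * t ^ (n + 1)) *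
            ((-((n : ℝ) + 1) * t) ^ k / (k.factorial : ℝ)) := tsum_congr fun k => by
              simp only [ha]; ring
      _ = (((n : ℝ) + 1) ^ n / ((n + 1).factorial : ℝ) * t ^ (n + 1)) *
            Real.exp (-((n : ℝ) + 1) * t) := by rw [tsum_mul_left, ← rexp_tsum]
      _ = _ := by
          have hexp : Real.exp (-t) ^ (n + 1) = Real.exp (-((n : ℝ) + 1) * t) := by
            rw [← Real.exp_nat_mul]
            congr 1
            push_cast
            ring
          rw [mul_pow, hexp]
          ring
  have hS0 : ∑ p ∈ Finset.HasAntidiagonal.antidiagonal (0 : ℕ), a p = t := by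
    rw [Finset.Nat.antidiagonal_zero, Finset.sum_singleton]
    simp only [ha]
    norm_num
  have hSpos : ∀ M : ℕ, ∑ p ∈ Finset.HasAntidiagonal.antidiagonal (M + 1), a p = 0 := by
    intro M
    rw [Finset.Nat.sum_antidiagonal_eq_sum_range_succ_mk]
    have hkey := tree_alt_sum (M + 1) (M + 2) (by omega)
    rw [Finset.sum_range_succ'] at hkey
    have h0 : (-1 : ℝ) ^ 0 * ((M + 2).choose 0 : ℝ) * ((0 : ℕ) : ℝ) ^ (M + 1) = 0 := by
      simp
    rw [h0, add_zero] at hkey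
    push_cast at hkey
    calc ∑ i ∈ Finset.range (M + 1 + 1), a (i, M + 1 - i)
        = ∑ i ∈ Finset.range (M + 2), (t ^ (M + 2) * (-1 : ℝ) ^ (M + 2) /
            ((M + 2).factorial : ℝ)) * ((-1 : ℝ) ^ (i + 1) * (((M + 2).choose (i + 1) : ℕ) : ℝ) *
            ((i : ℝ) + 1) ^ (M + 1)) := by
          refine Finset.sum_congr rfl fun i hi => ?_
          have hile : i ≤ M + 1 := by
            have := Finset.mem_range.mp hi; omega
          simp only [ha]
          exact tree_term_eq t M i hile
      _ = (t ^ (M + 2) * (-1 : ℝ) ^ (M + 2) / ((M + 2).factorial : ℝ)) *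
            ∑ i ∈ Finset.range (M + 2), (-1 : ℝ) ^ (i + 1) * (((M + 2).choose (i + 1) : ℕ) : ℝ) *
            ((i : ℝ) + 1) ^ (M + 1) := by rw [← Finset.mul_sum]
      _ = 0 := by
          rw [show ∑ i ∈ Finset.range (M + 2), (-1 : ℝ) ^ (i + 1) *
            (((M + 2).choose (i + 1) : ℕ) : ℝ) * ((i : ℝ) + 1) ^ (M + 1) = 0 from hkey, mul_zero]
  have hmain : ∑' p : ℕ × ℕ, a p = t := by
    have hsum2 : Summable fun c : (Σ n : ℕ, {x // x ∈ Finset.HasAntidiagonal.antidiagonal n}) =>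
        a (Finset.HasAntidiagonal.sigmaAntidiagonalEquivProd c) :=
      Finset.HasAntidiagonal.sigmaAntidiagonalEquivProd.summable_iff.mpr hsa
    calc ∑' p : ℕ × ℕ, a p
        = ∑' c : (Σ n : ℕ, {x // x ∈ Finset.HasAntidiagonal.antidiagonal n}),
            a (Finset.HasAntidiagonal.sigmaAntidiagonalEquivProd c) :=
          (Finset.HasAntidiagonal.sigmaAntidiagonalEquivProd.tsum_eq a).symm
      _ = ∑' (m : ℕ) (x : {x // x ∈ Finset.HasAntidiagonal.antidiagonal m}),
            a (Finset.HasAntidiagonal.sigmaAntidiagonalEquivProd ⟨m, x⟩) := hsum2.tsum_sigma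
      _ = ∑' m : ℕ, ∑ p ∈ Finset.HasAntidiagonal.antidiagonal m, a p :=
          tsum_congr fun m => Finset.tsum_subtype (Finset.HasAntidiagonal.antidiagonal m) a
      _ = ∑ p ∈ Finset.HasAntidiagonal.antidiagonal 0, a p := by
          refine tsum_eq_single 0 ?_
          intro m hm
          obtain ⟨M, rfl⟩ : ∃ M, m = M + 1 := ⟨m - 1, by omega⟩
          exact hSpos M
      _ = t := hS0
  calc ∑' n : ℕ, ((n : ℝ) + 1) ^ n * (t * Real.exp (-t)) ^ (n + 1) / ((n + 1).factorial : ℝ)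
      = ∑' n : ℕ, ∑' k : ℕ, a (n, k) := tsum_congr fun n => (hterm n).symm
    _ = ∑' p : ℕ × ℕ, a p := (Summable.tsum_prod hsa).symm
    _ = t := hmain

noncomputable def treeCoeff : ℕ → ℝ
  | 0 => 0
  | m + 1 => ((m : ℝ) + 1) ^ m / ((m + 1).factorial : ℝ)

noncomputable def treeF : ℝ → ℝ := (FormalMultilinearSeries.ofScalars ℝ treeCoeff).sum

lemma treeCoeff_norm_le (n : ℕ) : ‖treeCoeff n‖ ≤ Real.exp 1 ^ n := by
  cases n with
  | zero => simp [treeCoeff]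
  | succ m =>
    rw [Real.norm_eq_abs, abs_of_nonneg (by unfold treeCoeff; positivity), Real.exp_one_pow]
    show ((m : ℝ) + 1) ^ m / ((m + 1).factorial : ℝ) ≤ Real.exp ((m + 1 : ℕ) : ℝ)
    have e1 : ((m : ℝ) + 1) ^ m ≤ ((m : ℝ) + 1) ^ (m + 1) :=
      pow_le_pow_right₀ (by linarith [show (0 : ℝ) ≤ (m : ℝ) from Nat.cast_nonneg m]) (by omega)
    have e2 := pow_div_fact_le_exp (m + 1)
    push_cast at e2 ⊢
    calc ((m : ℝ) + 1) ^ m / ((m + 1).factorial : ℝ)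
        ≤ ((m : ℝ) + 1) ^ (m + 1) / ((m + 1).factorial : ℝ) := by gcongr
      _ ≤ Real.exp ((m : ℝ) + 1) := e2

lemma exp_mul_lt_one {x : ℝ} (hx : |x| < Real.exp (-1)) : Real.exp 1 * |x| < 1 := by
  have := mul_lt_mul_of_pos_left hx (Real.exp_pos 1)
  rwa [← Real.exp_add, show (1 : ℝ) + -1 = 0 by ring, Real.exp_zero] at this

lemma treeCoeff_summable {x : ℝ} (hx : |x| < Real.exp (-1)) :
    Summable fun n : ℕ => treeCoeff n * x ^ n := by
  rw [← summable_abs_iff]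
  refine Summable.of_nonneg_of_le (fun n => abs_nonneg _) (fun n => ?_)
    (summable_geometric_of_lt_one (by positivity) (exp_mul_lt_one hx))
  rw [abs_mul, abs_pow, mul_pow]
  exact mul_le_mul_of_nonneg_right (treeCoeff_norm_le n) (by positivity)

lemma treeF_eq_tsum' (x : ℝ) : treeF x = ∑' n : ℕ, treeCoeff n * x ^ n :=
  tsum_congr fun n => by
    rw [FormalMultilinearSeries.ofScalars_apply_eq, smul_eq_mul]

lemma treeF_analyticAt {x : ℝ} (hx : |x| < Real.exp (-1)) : AnalyticAt ℝ treeF x := by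
  set p := FormalMultilinearSeries.ofScalars ℝ treeCoeff with hp
  have hx0 : (0 : ℝ) ≤ |x| := abs_nonneg x
  set r : ℝ≥0 := ⟨(|x| + Real.exp (-1)) / 2, by positivity⟩ with hr
  have hrval : (r : ℝ) = (|x| + Real.exp (-1)) / 2 := rfl
  have hxr : |x| < (r : ℝ) := by rw [hrval]; linarith
  have hrer : (r : ℝ) < Real.exp (-1) := by rw [hrval]; linarith
  have hrpos : (0 : ℝ) < (r : ℝ) := lt_of_le_of_lt hx0 hxr
  have hsum : Summable fun n : ℕ => ‖p n‖ * (r : ℝ) ^ n := by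
    have hr1 : Real.exp 1 * |(r : ℝ)| < 1 := exp_mul_lt_one (by rwa [abs_of_pos hrpos])
    refine Summable.of_nonneg_of_le (fun n => by positivity) (fun n => ?_)
      (summable_geometric_of_lt_one (by positivity) hr1)
    rw [hp, FormalMultilinearSeries.ofScalars_norm, mul_pow, abs_of_pos hrpos]
    exact mul_le_mul_of_nonneg_right (treeCoeff_norm_le n) (by positivity)
  have hle : (r : ℝ≥0∞) ≤ p.radius := p.le_radius_of_summable hsum
  have hradpos : (0 : ℝ≥0∞) < p.radius :=
    lt_of_lt_of_le (by exact_mod_cast hrpos) hle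
  have hball := p.hasFPowerSeriesOnBall hradpos
  exact hball.analyticAt_of_mem (by
    rw [EMetric.mem_ball, edist_dist, dist_zero_right, Real.norm_eq_abs]
    calc ENNReal.ofReal |x| < ENNReal.ofReal (r : ℝ) :=
          (ENNReal.ofReal_lt_ofReal_iff hrpos).mpr hxr
      _ = (r : ℝ≥0∞) := ENNReal.ofReal_coe_nnreal
      _ ≤ p.radius := hle)

lemma treeF_eq_tsum {x : ℝ} (hx : |x| < Real.exp (-1)) :
    treeF x = ∑' n : ℕ, ((n : ℝ) + 1) ^ n * x ^ (n + 1) / ((n + 1).factorial : ℝ) := by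
  have hs := treeCoeff_summable hx
  rw [treeF_eq_tsum', Summable.tsum_eq_zero_add hs]
  have h0 : treeCoeff 0 * x ^ 0 = 0 := by simp [treeCoeff]
  rw [h0, zero_add]
  exact tsum_congr fun n => by
    show treeCoeff (n + 1) * x ^ (n + 1) = _
    simp only [treeCoeff]
    ring

lemma tree_abs_lt (t : ℝ) (h1 : -(1 / 8) < t) (h2 : t < 1) :
    |t * Real.exp (-t)| < Real.exp (-1) := by
  have hkey : |t| < Real.exp (t - 1) := by
    rcases le_or_gt t 0 with h | h
    · have : |t| = -t := abs_of_nonpos h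
      have h98 : Real.exp (9 / 8) < 8 := by
        calc Real.exp (9 / 8) ≤ Real.exp (5 / 4) := Real.exp_le_exp.mpr (by norm_num)
          _ < 4 := exp54lt
          _ < 8 := by norm_num
      have h3 : (1 : ℝ) / 8 < Real.exp (t - 1) := by
        have : Real.exp (-(9 / 8) : ℝ) ≤ Real.exp (t - 1) := Real.exp_le_exp.mpr (by linarith)
        have h4 : (1 : ℝ) / 8 < Real.exp (-(9 / 8) : ℝ) := by
          rw [Real.exp_neg, ← one_div]
          rw [div_lt_div_iff₀ (by norm_num) (Real.exp_pos _)]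
          linarith
        linarith
      rw [this]; linarith
    · rw [abs_of_pos h]
      have := Real.add_one_lt_exp (show t - 1 ≠ 0 by intro hc; rw [sub_eq_zero] at hc; exact absurd hc (by linarith))
      linarith
  rw [abs_mul, abs_of_pos (Real.exp_pos (-t)), Real.exp_neg t]
  calc |t| * (Real.exp t)⁻¹ < Real.exp (t - 1) * (Real.exp t)⁻¹ :=
        mul_lt_mul_of_pos_right hkey (by positivity)
    _ = Real.exp (-1) := by rw [Real.exp_sub]; field_simp [Real.exp_neg]; rw [← Real.exp_add]; norm_num


/-- The tree-function identity `∑_{n=1}^∞ n^{n-1} (t e^{-t})^n / n! = t`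
for `0 ≤ t < 1`. -/
theorem tree_function_identity (t : ℝ) (ht0 : 0 ≤ t) (ht1 : t < 1) :
    ∑' n : ℕ, ((n : ℝ) + 1) ^ n * (t * Real.exp (-t)) ^ (n + 1)
        / (Nat.factorial (n + 1) : ℝ) = t := by
  set U : Set ℝ := Set.Ioo (-(1 / 8) : ℝ) 1 with hU
  have hpsi : AnalyticOnNhd ℝ (fun s => treeF (s * Real.exp (-s))) U := by
    intro s hs
    have hxabs := tree_abs_lt s hs.1 hs.2
    have hinner : AnalyticAt ℝ (fun y : ℝ => y * Real.exp (-y)) s :=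
      analyticAt_id.mul (analyticAt_rexp.comp analyticAt_id.neg)
    exact AnalyticAt.comp (g := treeF) (f := fun y : ℝ => y * Real.exp (-y)) (x := s)
      (treeF_analyticAt hxabs) hinner
  have hid : AnalyticOnNhd ℝ (fun s : ℝ => s) U := fun s _ => analyticAt_id
  have hpre : IsPreconnected U := isPreconnected_Ioo
  have h0U : (0 : ℝ) ∈ U := by constructor <;> norm_num
  have hev : (fun s => treeF (s * Real.exp (-s))) =ᶠ[nhds 0] (fun s : ℝ => s) := by
    filter_upwards [Ioo_mem_nhds (show -(1 / 8) < (0 : ℝ) by norm_num)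
      (show (0 : ℝ) < 1 / 8 by norm_num)] with s hs
    have habs : |s| < 1 / 8 := abs_lt.mpr ⟨by linarith [hs.1], hs.2⟩
    have hxa : |s * Real.exp (-s)| < Real.exp (-1) :=
      tree_abs_lt s (by linarith [hs.1]) (by linarith [hs.2])
    rw [treeF_eq_tsum hxa]
    exact tree_small s habs
  have heq := hpsi.eqOn_of_preconnected_of_eventuallyEq hid hpre h0U hev
  have htU : t ∈ U := ⟨by linarith, ht1⟩
  have hxa : |t * Real.exp (-t)| < Real.exp (-1) := tree_abs_lt t (by linarith) ht1
  have hfin := heq htU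
  rw [show (fun s => treeF (s * Real.exp (-s))) t = treeF (t * Real.exp (-t)) from rfl] at hfin
  rw [← treeF_eq_tsum hxa] at *
  exact hfin
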